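/- Let $v_2$ be an integer with $v_2 > 18$ and $3 \nmid v_2$, let $a_j \in \mathbb{C}$ for integers $j$ with $-\lfloor v_2/3 \rfloor - 3 \le j \le -4$, and define $\varphi_1 = T^6$ and $\varphi_2 = T^9 + T^{v_2 - 9} + \sum_{j = -\lfloor v_2/3 \rfloor - 3}^{-4} a_j T^{2 v_2 + 3j}$ in $\mathbb{C}[[T]]$. Then the formal power series $\varphi_2^2 - \varphi_1^3 \in \mathbb{C}[[T]]$ has order exactly $v_2$; more precisely, its coefficient of $T^{v_2}$ equals $2$ and all coefficients of $T^n$ with $n < v_2$ vanish. -/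

import Mathlib

open PowerSeries

/-- For `φ₁ = T⁶` and `φ₂ = T⁹ + T^{v₂-9} + ∑_{j=-⌊v₂/3⌋-3}^{-4} aⱼ T^{2v₂+3j}`
with `v₂ > 18` and `3 ∤ v₂`, the series `φ₂² - φ₁³` has order exactly `v₂`: its
coefficient of `T^{v₂}` is `2` and all lower coefficients vanish. -/
theorem order_of_h_along_parameterization (v2 : ℕ) (h18 : 18 < v2) (h3 : ¬ (3 ∣ v2))
    (a : ℤ → ℂ) (φ₁ φ₂ : PowerSeries ℂ)
    (hφ₁ : φ₁ = PowerSeries.X ^ 6)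
    (hφ₂ : φ₂ = PowerSeries.X ^ 9 + PowerSeries.X ^ (v2 - 9) +
      ∑ j ∈ Finset.Icc (-((v2 / 3 : ℕ) : ℤ) - 3) (-4),
        PowerSeries.C (a j) * PowerSeries.X ^ (2 * (v2 : ℤ) + 3 * j).toNat) :
    (φ₂ ^ 2 - φ₁ ^ 3).order = (v2 : ℕ∞) ∧
      PowerSeries.coeff v2 (φ₂ ^ 2 - φ₁ ^ 3) = 2 ∧
      ∀ n : ℕ, n < v2 → PowerSeries.coeff n (φ₂ ^ 2 - φ₁ ^ 3) = 0 := by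
  set S : PowerSeries ℂ := ∑ j ∈ Finset.Icc (-((v2 / 3 : ℕ) : ℤ) - 3) (-4),
      PowerSeries.C (a j) * PowerSeries.X ^ (2 * (v2 : ℤ) + 3 * j).toNat with hS
  have hexp : ∀ j ∈ Finset.Icc (-((v2 / 3 : ℕ) : ℤ) - 3) (-4 : ℤ),
      v2 - 8 ≤ (2 * (v2 : ℤ) + 3 * j).toNat := by
    intro j hj
    simp only [Finset.mem_Icc] at hj
    omega
  have e1 : (PowerSeries.X : PowerSeries ℂ) ^ 9 * PowerSeries.X ^ (v2 - 9)
      = PowerSeries.X ^ v2 := by rw [← pow_add]; congr 1; omega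
  have e2 : (PowerSeries.X : PowerSeries ℂ) ^ (v2 - 9) * PowerSeries.X ^ (v2 - 9)
      = PowerSeries.X ^ (2 * v2 - 18) := by rw [← pow_add]; congr 1; omega
  have expand : φ₂ ^ 2 - φ₁ ^ 3 =
      (PowerSeries.X ^ 9 * PowerSeries.X ^ (v2 - 9)
        + PowerSeries.X ^ 9 * PowerSeries.X ^ (v2 - 9))
      + PowerSeries.X ^ (v2 - 9) * PowerSeries.X ^ (v2 - 9)
      + (PowerSeries.X ^ 9 * S + PowerSeries.X ^ 9 * S)
      + (PowerSeries.X ^ (v2 - 9) * S + PowerSeries.X ^ (v2 - 9) * S)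
      + S * S := by
    rw [hφ₁, hφ₂]; ring
  rw [e1, e2] at expand
  have hS1 : ∀ n : ℕ, n ≤ v2 → PowerSeries.coeff n (PowerSeries.X ^ 9 * S) = 0 := by
    intro n hn
    rw [hS, Finset.mul_sum, map_sum]
    apply Finset.sum_eq_zero
    intro j hj
    have hb := hexp j hj
    have : (PowerSeries.X : PowerSeries ℂ) ^ 9
        * (PowerSeries.C (a j) * PowerSeries.X ^ (2 * (v2 : ℤ) + 3 * j).toNat)
        = PowerSeries.C (a j)
          * PowerSeries.X ^ (9 + (2 * (v2 : ℤ) + 3 * j).toNat) := by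
      rw [pow_add]; ring
    rw [this, PowerSeries.coeff_C_mul, PowerSeries.coeff_X_pow, if_neg (by omega), mul_zero]
  have hS2 : ∀ n : ℕ, n ≤ v2 →
      PowerSeries.coeff n (PowerSeries.X ^ (v2 - 9) * S) = 0 := by
    intro n hn
    rw [hS, Finset.mul_sum, map_sum]
    apply Finset.sum_eq_zero
    intro j hj
    have hb := hexp j hj
    have : (PowerSeries.X : PowerSeries ℂ) ^ (v2 - 9)
        * (PowerSeries.C (a j) * PowerSeries.X ^ (2 * (v2 : ℤ) + 3 * j).toNat)
        = PowerSeries.C (a j)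
          * PowerSeries.X ^ ((v2 - 9) + (2 * (v2 : ℤ) + 3 * j).toNat) := by
      rw [pow_add]; ring
    rw [this, PowerSeries.coeff_C_mul, PowerSeries.coeff_X_pow, if_neg (by omega), mul_zero]
  have hSS : ∀ n : ℕ, n ≤ v2 → PowerSeries.coeff n (S * S) = 0 := by
    intro n hn
    rw [hS, Finset.sum_mul_sum, map_sum]
    apply Finset.sum_eq_zero
    intro i hi
    rw [map_sum]
    apply Finset.sum_eq_zero
    intro j hj
    have hbi := hexp i hi
    have hbj := hexp j hj
    have : (PowerSeries.C (a i) * PowerSeries.X ^ (2 * (v2 : ℤ) + 3 * i).toNat)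
        * (PowerSeries.C (a j) * PowerSeries.X ^ (2 * (v2 : ℤ) + 3 * j).toNat)
        = PowerSeries.C (a i * a j)
          * PowerSeries.X ^ ((2 * (v2 : ℤ) + 3 * i).toNat + (2 * (v2 : ℤ) + 3 * j).toNat) := by
      rw [pow_add, map_mul]; ring
    rw [this, PowerSeries.coeff_C_mul, PowerSeries.coeff_X_pow, if_neg (by omega), mul_zero]
  have key : ∀ n : ℕ, n ≤ v2 →
      PowerSeries.coeff n (φ₂ ^ 2 - φ₁ ^ 3) = if n = v2 then 2 else 0 := by
    intro n hn
    rw [expand]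
    simp only [map_add, hS1 n hn, hS2 n hn, hSS n hn, add_zero, PowerSeries.coeff_X_pow]
    rw [if_neg (show n ≠ 2 * v2 - 18 by omega)]
    split_ifs <;> norm_num
  have hcv : PowerSeries.coeff v2 (φ₂ ^ 2 - φ₁ ^ 3) = 2 := by
    rw [key v2 le_rfl, if_pos rfl]
  have hlow : ∀ n : ℕ, n < v2 → PowerSeries.coeff n (φ₂ ^ 2 - φ₁ ^ 3) = 0 := by
    intro n hn
    rw [key n hn.le, if_neg (by omega)]
  refine ⟨?_, hcv, hlow⟩
  rw [PowerSeries.order_eq_nat]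
  exact ⟨by rw [hcv]; norm_num, hlow⟩
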